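/- arXiv:2202.00437 — 5 statements merged into one kernel-verified Lean document; each statement's English description precedes it below -/
import Mathlib

section
/- Let β=(β_n)_{n∈ℕ} be a Cantor base with x_β<+∞. For all x∈[0,1) and all n∈ℕ, the lazy digits and remainders of x_β−x are obtained by flipping the greedy digits and remainders of x: ξ_{β,n}(x_β−x)=⌈β_n⌉−1−ε_{β,n}(x) and s_{β,n}(x_β−x)=x_{β^(n+1)}−r_{β,n}(x). In particular, ℓ_β(x_β−x)=θ_β(d_β(x)). -/
open Filter Topology

/-- A Cantor real base: a sequence of reals `> 1` whose infinite product diverges to `+∞`. -/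
structure IsCantorBase (β : ℕ → ℝ) : Prop where
  one_lt : ∀ n, 1 < β n
  prod_tendsto : Tendsto (fun N => ∏ i ∈ Finset.range N, β i) atTop atTop

/-- The product `β_0 ⋯ β_n`. -/
noncomputable def prodUpTo (β : ℕ → ℝ) (n : ℕ) : ℝ := ∏ i ∈ Finset.range (n + 1), β i

/-- The shifted base `β^(n) = (β_n, β_{n+1}, …)`. -/
def shiftBase (β : ℕ → ℝ) (n : ℕ) : ℕ → ℝ := fun m => β (n + m)

/-- `x_β = Σ_{n} (⌈β_n⌉ - 1)/(β_0 ⋯ β_n)`. -/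
noncomputable def xB (β : ℕ → ℝ) : ℝ := ∑' n, ((⌈β n⌉ : ℝ) - 1) / prodUpTo β n

/-- The condition `x_β < +∞`, i.e. the series defining `x_β` converges. -/
def XBSummable (β : ℕ → ℝ) : Prop :=
  Summable (fun n => ((⌈β n⌉ : ℝ) - 1) / prodUpTo β n)

/-- `val_β(a) = Σ_n a_n/(β_0 ⋯ β_n)`. -/
noncomputable def valB (β : ℕ → ℝ) (a : ℕ → ℤ) : ℝ := ∑' n, (a n : ℝ) / prodUpTo β n

/-- The digit condition `a_n ∈ [[0, ⌈β_n⌉ - 1]]` for all `n`. -/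
def validWord (β : ℕ → ℝ) (a : ℕ → ℤ) : Prop := ∀ n, 0 ≤ a n ∧ a n ≤ ⌈β n⌉ - 1

/-- The flip map `θ_β`. -/
noncomputable def theta (β : ℕ → ℝ) (a : ℕ → ℤ) : ℕ → ℤ := fun n => ⌈β n⌉ - 1 - a n

/-- The greedy remainders `r_{β,n}(x)`. -/
noncomputable def greedyR (β : ℕ → ℝ) (x : ℝ) : ℕ → ℝ
  | 0 => β 0 * x - (⌊β 0 * x⌋ : ℝ)
  | n + 1 => β (n + 1) * greedyR β x n - (⌊β (n + 1) * greedyR β x n⌋ : ℝ)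

/-- The greedy digits `ε_{β,n}(x)`; `greedyDigit β x` is the greedy β-expansion `d_β(x)`. -/
noncomputable def greedyDigit (β : ℕ → ℝ) (x : ℝ) : ℕ → ℤ
  | 0 => ⌊β 0 * x⌋
  | n + 1 => ⌊β (n + 1) * greedyR β x n⌋

/-- The lazy remainders `s_{β,n}(x)`. -/
noncomputable def lazyS (β : ℕ → ℝ) (x : ℝ) : ℕ → ℝ
  | 0 => β 0 * x - (⌈β 0 * x - xB (shiftBase β 1)⌉ : ℝ)
  | n + 1 => β (n + 1) * lazyS β x n -
      (⌈β (n + 1) * lazyS β x n - xB (shiftBase β (n + 2))⌉ : ℝ)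

/-- The lazy digits `ξ_{β,n}(x)`; `lazyDigit β x` is the lazy β-expansion `ℓ_β(x)`. -/
noncomputable def lazyDigit (β : ℕ → ℝ) (x : ℝ) : ℕ → ℤ
  | 0 => ⌈β 0 * x - xB (shiftBase β 1)⌉
  | n + 1 => ⌈β (n + 1) * lazyS β x n - xB (shiftBase β (n + 2))⌉

/-- Strict lexicographic order on infinite words. -/
def lexLt (a b : ℕ → ℤ) : Prop := ∃ k, (∀ i < k, a i = b i) ∧ a k < b k

/-- Lexicographic order on infinite words. -/
def lexLe (a b : ℕ → ℤ) : Prop := lexLt a b ∨ a = b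

/-- `D_β`, the set of greedy β-expansions of points of `[0,1)`. -/
def greedySet (β : ℕ → ℝ) : Set (ℕ → ℤ) :=
  {a | ∃ x ∈ Set.Ico (0 : ℝ) 1, a = greedyDigit β x}

/-- `D'_β`, the set of lazy β-expansions of points of `(x_β - 1, x_β]`. -/
def lazySet (β : ℕ → ℝ) : Set (ℕ → ℤ) :=
  {a | ∃ x ∈ Set.Ioc (xB β - 1) (xB β), a = lazyDigit β x}

/-- `Δ'_β = ⋃_n D'_{β^(n)}`. -/
def deltaSet (β : ℕ → ℝ) : Set (ℕ → ℤ) := ⋃ n, lazySet (shiftBase β n)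

lemma prodUpTo_shift_one (β : ℕ → ℝ) (n : ℕ) :
    prodUpTo β (n + 1) = β 0 * prodUpTo (shiftBase β 1) n := by
  unfold prodUpTo shiftBase
  rw [Finset.prod_range_succ']
  rw [mul_comm]
  congr 1
  exact Finset.prod_congr rfl fun i _ => by rw [add_comm]

lemma shiftBase_shift (β : ℕ → ℝ) (k j : ℕ) :
    shiftBase (shiftBase β k) j = shiftBase β (k + j) := by
  funext m; simp [shiftBase, add_assoc]

lemma shiftBase_zero (β : ℕ → ℝ) : shiftBase β 0 = β := by
  funext m; simp [shiftBase]

lemma xbsummable_shift_one (β : ℕ → ℝ) (hpos : ∀ n, 0 < β n) (hx : XBSummable β) :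
    XBSummable (shiftBase β 1) := by
  unfold XBSummable at *
  have h1 : Summable (fun n => ((⌈β (n + 1)⌉ : ℝ) - 1) / prodUpTo β (n + 1)) :=
    (summable_nat_add_iff (f := fun n => ((⌈β n⌉ : ℝ) - 1) / prodUpTo β n) 1).2 hx
  have h2 := h1.mul_left (β 0)
  apply h2.congr
  intro n
  have hb0 : β 0 ≠ 0 := (hpos 0).ne'
  have hp : prodUpTo (shiftBase β 1) n ≠ 0 := by
    unfold prodUpTo
    exact Finset.prod_ne_zero_iff.2 fun i _ => (hpos _).ne'
  have hs : shiftBase β 1 n = β (n + 1) := by simp [shiftBase, add_comm]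
  rw [prodUpTo_shift_one, hs]
  field_simp

lemma xbsummable_shift (β : ℕ → ℝ) (hpos : ∀ n, 0 < β n) (hx : XBSummable β) (k : ℕ) :
    XBSummable (shiftBase β k) := by
  induction k with
  | zero => rwa [shiftBase_zero]
  | succ k ih =>
    have := xbsummable_shift_one (shiftBase β k) (fun n => hpos _) ih
    rwa [shiftBase_shift] at this

lemma xB_step (β : ℕ → ℝ) (hpos : ∀ n, 0 < β n) (hx : XBSummable β) :
    β 0 * xB β = ((⌈β 0⌉ : ℝ) - 1) + xB (shiftBase β 1) := by
  have hb0 : β 0 ≠ 0 := (hpos 0).ne'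
  unfold xB
  rw [Summable.tsum_eq_zero_add hx, mul_add]
  congr 1
  · have : prodUpTo β 0 = β 0 := by simp [prodUpTo]
    rw [this]
    field_simp
  · rw [← tsum_mul_left]
    apply tsum_congr
    intro n
    have hp : prodUpTo (shiftBase β 1) n ≠ 0 := by
      unfold prodUpTo
      exact Finset.prod_ne_zero_iff.2 fun i _ => (hpos _).ne'
    have : shiftBase β 1 n = β (n + 1) := by simp [shiftBase, add_comm]
    rw [this, prodUpTo_shift_one]
    field_simp

lemma xB_rec (β : ℕ → ℝ) (hpos : ∀ n, 0 < β n) (hx : XBSummable β) (n : ℕ) :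
    β n * xB (shiftBase β n) = ((⌈β n⌉ : ℝ) - 1) + xB (shiftBase β (n + 1)) := by
  have h := xB_step (shiftBase β n) (fun m => hpos _) (xbsummable_shift β hpos hx n)
  rw [shiftBase_shift] at h
  simpa [shiftBase] using h

lemma ceil_intsub (c : ℤ) (y : ℝ) : ⌈(c : ℝ) - y⌉ = c - ⌊y⌋ := by
  rw [show (c : ℝ) - y = -(y - (c : ℤ)) by ring, Int.ceil_neg, Int.floor_sub_intCast]
  ring

/-- flipping greedy digits/remainders gives lazy ones; in particular
`ℓ_β(x_β − x) = θ_β(d_β(x))`. -/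
theorem lazy_eq_flip_greedy (β : ℕ → ℝ) (hβ : IsCantorBase β) (hx : XBSummable β) :
    ∀ x ∈ Set.Ico (0 : ℝ) 1,
      (∀ n : ℕ,
        lazyDigit β (xB β - x) n = ⌈β n⌉ - 1 - greedyDigit β x n ∧
        lazyS β (xB β - x) n = xB (shiftBase β (n + 1)) - greedyR β x n) ∧
      lazyDigit β (xB β - x) = theta β (greedyDigit β x) := by
  intro x _
  have hpos : ∀ n, 0 < β n := fun n => lt_trans one_pos (hβ.one_lt n)
  have key : ∀ n : ℕ,
      lazyDigit β (xB β - x) n = ⌈β n⌉ - 1 - greedyDigit β x n ∧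
      lazyS β (xB β - x) n = xB (shiftBase β (n + 1)) - greedyR β x n := by
    intro n
    induction n with
    | zero =>
      have hrec := xB_step β hpos hx
      have h0 : β 0 * (xB β - x) - xB (shiftBase β 1) =
          ((⌈β 0⌉ - 1 : ℤ) : ℝ) - β 0 * x := by
        push_cast
        linear_combination hrec
      have hd : lazyDigit β (xB β - x) 0 = ⌈β 0⌉ - 1 - greedyDigit β x 0 := by
        show ⌈β 0 * (xB β - x) - xB (shiftBase β 1)⌉ = ⌈β 0⌉ - 1 - ⌊β 0 * x⌋
        rw [h0, ceil_intsub]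
      refine ⟨hd, ?_⟩
      show β 0 * (xB β - x) - (⌈β 0 * (xB β - x) - xB (shiftBase β 1)⌉ : ℝ) =
        xB (shiftBase β (0 + 1)) - (β 0 * x - (⌊β 0 * x⌋ : ℝ))
      rw [h0, ceil_intsub]
      push_cast
      linear_combination hrec
    | succ n ih =>
      have hrec := xB_rec β hpos hx (n + 1)
      have h1 : β (n + 1) * lazyS β (xB β - x) n - xB (shiftBase β (n + 2)) =
          ((⌈β (n + 1)⌉ - 1 : ℤ) : ℝ) - β (n + 1) * greedyR β x n := by
        rw [ih.2]
        push_cast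
        linear_combination hrec
      have hd : lazyDigit β (xB β - x) (n + 1) =
          ⌈β (n + 1)⌉ - 1 - greedyDigit β x (n + 1) := by
        show ⌈β (n + 1) * lazyS β (xB β - x) n - xB (shiftBase β (n + 2))⌉ =
          ⌈β (n + 1)⌉ - 1 - ⌊β (n + 1) * greedyR β x n⌋
        rw [h1, ceil_intsub]
      refine ⟨hd, ?_⟩
      show β (n + 1) * lazyS β (xB β - x) n -
          (⌈β (n + 1) * lazyS β (xB β - x) n - xB (shiftBase β (n + 2))⌉ : ℝ) =
        xB (shiftBase β (n + 1 + 1)) -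
          (β (n + 1) * greedyR β x n - (⌊β (n + 1) * greedyR β x n⌋ : ℝ))
      rw [h1, ceil_intsub, ih.2]
      push_cast
      linear_combination hrec
  refine ⟨key, ?_⟩
  funext n
  rw [(key n).1]
  rfl
end

section
/- Let β=(β_n)_{n∈ℕ} be a Cantor base with x_β<+∞ and let x∈(x_β−1,x_β]. The lazy β-expansion ℓ_β(x) is lexicographically minimal among all β-representations a of x satisfying a_n∈[[0,⌈β_n⌉−1]] for all n∈ℕ. -/
open Filter Topology

namespace LazyAux

variable {β : ℕ → ℝ}

lemma P_pos (hβ : ∀ n, 1 < β n) (n : ℕ) : 0 < ∏ i ∈ Finset.range n, β i :=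
  Finset.prod_pos fun i _ => lt_trans one_pos (hβ i)

lemma prodUpTo_pos (hβ : ∀ n, 1 < β n) (n : ℕ) : 0 < prodUpTo β n :=
  P_pos hβ (n + 1)

lemma prodUpTo_shift (β : ℕ → ℝ) (k m : ℕ) :
    prodUpTo β (k + m) = (∏ i ∈ Finset.range k, β i) * prodUpTo (shiftBase β k) m := by
  unfold prodUpTo shiftBase
  rw [show k + m + 1 = k + (m + 1) by ring, Finset.prod_range_add]

lemma xB_shift (hβ : ∀ n, 1 < β n) (k : ℕ) :
    xB (shiftBase β k) = ∑' m, (∏ i ∈ Finset.range k, β i) *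
      (((⌈β (k + m)⌉ : ℝ) - 1) / prodUpTo β (k + m)) := by
  unfold xB
  refine tsum_congr fun m => ?_
  have h1 : (0:ℝ) < ∏ i ∈ Finset.range k, β i := P_pos hβ k
  have h2 : 0 < prodUpTo (shiftBase β k) m := prodUpTo_pos (fun n => hβ (k + n)) m
  rw [prodUpTo_shift β k m]
  show ((⌈β (k + m)⌉ : ℝ) - 1) / prodUpTo (shiftBase β k) m = _
  field_simp

/-- `lazyS'` is the sequence `x, s₀(x), s₁(x), …`. -/
noncomputable def lazyS' (β : ℕ → ℝ) (x : ℝ) : ℕ → ℝ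
  | 0 => x
  | n + 1 => lazyS β x n

lemma lazyDigit_eq (β : ℕ → ℝ) (x : ℝ) (n : ℕ) :
    lazyDigit β x n = ⌈β n * lazyS' β x n - xB (shiftBase β (n + 1))⌉ := by
  cases n <;> rfl

lemma lazyS'_succ (β : ℕ → ℝ) (x : ℝ) (n : ℕ) :
    lazyS' β x (n + 1) = β n * lazyS' β x n - (lazyDigit β x n : ℝ) := by
  cases n <;> rfl

lemma lazyS'_eq (hβ : ∀ n, 1 < β n) (x : ℝ) (n : ℕ) :
    lazyS' β x n = (∏ i ∈ Finset.range n, β i) *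
      (x - ∑ i ∈ Finset.range n, (lazyDigit β x i : ℝ) / prodUpTo β i) := by
  induction n with
  | zero => simp [lazyS']
  | succ n ih =>
    rw [lazyS'_succ, ih, Finset.prod_range_succ, Finset.sum_range_succ]
    have hP : prodUpTo β n = (∏ i ∈ Finset.range n, β i) * β n :=
      Finset.prod_range_succ β n
    have h1 : (0:ℝ) < ∏ i ∈ Finset.range n, β i := P_pos hβ n
    have h2 : β n ≠ 0 := ne_of_gt (lt_trans one_pos (hβ n))
    rw [hP]
    field_simp
    ring

lemma step (hβ : ∀ n, 1 < β n) (hx : XBSummable β) (x : ℝ)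
    (a : ℕ → ℤ) (ha : validWord β a) (hval : valB β a = x)
    (hg : Summable fun m => (a m : ℝ) / prodUpTo β m)
    (n : ℕ) (hpre : ∀ i < n, lazyDigit β x i = a i) :
    lazyDigit β x n ≤ a n := by
  set f : ℕ → ℝ := fun m => ((⌈β m⌉ : ℝ) - 1) / prodUpTo β m with hf_def
  set g : ℕ → ℝ := fun m => (a m : ℝ) / prodUpTo β m with hg_def
  have hgle : ∀ m, g m ≤ f m := by
    intro m
    have hnum : (a m : ℝ) ≤ (⌈β m⌉ : ℝ) - 1 := by
      have := (ha m).2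
      have : (a m : ℝ) ≤ ((⌈β m⌉ - 1 : ℤ) : ℝ) := by exact_mod_cast this
      push_cast at this; linarith
    exact (div_le_div_iff_of_pos_right (prodUpTo_pos hβ m)).mpr hnum
  -- the remainder as a tail series
  have hsum_eq : x - ∑ i ∈ Finset.range n, g i = ∑' m, g (m + n) := by
    have h := Summable.sum_add_tsum_nat_add n hg
    have hx' : ∑' m, g m = x := hval
    linarith [h, hx'.symm]
  have hS : lazyS' β x n =
      (∏ i ∈ Finset.range n, β i) * ∑' m, g (m + n) := by
    rw [lazyS'_eq hβ x n, ← hsum_eq]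
    congr 2
    exact Finset.sum_congr rfl fun i hi => by
      rw [hpre i (Finset.mem_range.mp hi)]
  -- multiply by β n
  have hPsucc : (∏ i ∈ Finset.range (n+1), β i) =
      (∏ i ∈ Finset.range n, β i) * β n := Finset.prod_range_succ β n
  set P : ℝ := ∏ i ∈ Finset.range (n+1), β i with hP_def
  have hPpos : 0 < P := P_pos hβ (n+1)
  have hβS : β n * lazyS' β x n = ∑' m, P * g (m + n) := by
    rw [hS, tsum_mul_left, hPsucc]; ring
  have hshift : Summable fun m => g (m + n) := (summable_nat_add_iff n).mpr hg
  have hshift1 : Summable fun m => g (m + 1 + n) := by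
    have := (summable_nat_add_iff (n+1)).mpr hg
    refine this.congr fun m => ?_
    congr 1; omega
  have hsplit : (∑' m, P * g (m + n)) = P * g n + ∑' m, P * g (m + 1 + n) := by
    have := Summable.tsum_eq_zero_add (hshift.mul_left P)
    simpa using this
  have hgn : P * g n = (a n : ℝ) := by
    show P * ((a n : ℝ) / prodUpTo β n) = _
    rw [show prodUpTo β n = P from rfl]
    field_simp
  -- the tail is at most xB (shiftBase β (n+1))
  have hxs : Summable f := hx
  have hxBsummable : ∀ k, Summable fun m => (∏ i ∈ Finset.range k, β i) * f (k + m) := by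
    intro k
    have h1 : Summable fun m => f (m + k) := (summable_nat_add_iff k).mpr hxs
    exact (h1.congr fun m => by rw [add_comm]).mul_left _
  have htail_le : (∑' m, P * g (m + 1 + n)) ≤ xB (shiftBase β (n+1)) := by
    rw [xB_shift hβ (n+1)]
    have hsumm1 : Summable fun m => P * g (m + 1 + n) := hshift1.mul_left P
    have hsumm2 : Summable fun m => P * f ((n+1) + m) := hxBsummable (n+1)
    refine Summable.tsum_le_tsum (fun m => ?_) hsumm1 hsumm2
    have : g (m + 1 + n) ≤ f ((n+1) + m) := by
      rw [show (n+1) + m = m + 1 + n by omega]; exact hgle _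
    exact mul_le_mul_of_nonneg_left this hPpos.le
  -- conclude
  have hkey : β n * lazyS' β x n - xB (shiftBase β (n+1)) ≤ (a n : ℝ) := by
    rw [hβS, hsplit, hgn]; linarith
  rw [lazyDigit_eq]
  exact Int.ceil_le.mpr hkey

end LazyAux

/-- the lazy β-expansion is lexicographically minimal among all
β-representations of `x` with digits in `[[0,⌈β_n⌉-1]]`. -/
theorem lazy_lex_minimal (β : ℕ → ℝ) (hβ : IsCantorBase β) (hx : XBSummable β)
    (x : ℝ) (hmem : x ∈ Set.Ioc (xB β - 1) (xB β)) :
    ∀ a : ℕ → ℤ, validWord β a → valB β a = x → lexLe (lazyDigit β x) a := by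
  intro a ha hval
  have hβ' := hβ.one_lt
  have hg : Summable fun m => (a m : ℝ) / prodUpTo β m := by
    refine Summable.of_nonneg_of_le (fun m => ?_) (fun m => ?_) hx
    · exact div_nonneg (by exact_mod_cast (ha m).1) (LazyAux.prodUpTo_pos hβ' m).le
    · have hnum : (a m : ℝ) ≤ (⌈β m⌉ : ℝ) - 1 := by
        have := (ha m).2
        have : (a m : ℝ) ≤ ((⌈β m⌉ - 1 : ℤ) : ℝ) := by exact_mod_cast this
        push_cast at this; linarith
      exact (div_le_div_iff_of_pos_right (LazyAux.prodUpTo_pos hβ' m)).mpr hnum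
  by_cases h : lazyDigit β x = a
  · exact Or.inr h
  · left
    have hne : ∃ k, lazyDigit β x k ≠ a k := Function.ne_iff.mp h
    refine ⟨Nat.find hne, fun i hi => not_not.mp (Nat.find_min hne hi), ?_⟩
    have hle := LazyAux.step hβ' hx x a ha hval hg (Nat.find hne)
      (fun i hi => not_not.mp (Nat.find_min hne hi))
    exact lt_of_le_of_ne hle (Nat.find_spec hne)
end

section
/- Let β=(β_n)_{n∈ℕ} be a Cantor base with x_β<+∞. The map ℓ_β:(x_β−1,x_β]→ℕ^ℕ is increasing: for all x,y∈(x_β−1,x_β], x<y if and only if ℓ_β(x)<_lex ℓ_β(y). -/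
open Filter Topology

/-- The lazy remainder in terms of the lazy digit, step 0. -/
lemma lazyS_zero_eq (β : ℕ → ℝ) (x : ℝ) :
    lazyS β x 0 = β 0 * x - (lazyDigit β x 0 : ℝ) := rfl

/-- The lazy remainder in terms of the lazy digit, successor step. -/
lemma lazyS_succ_eq (β : ℕ → ℝ) (x : ℝ) (n : ℕ) :
    lazyS β x (n + 1) = β (n + 1) * lazyS β x n - (lazyDigit β x (n + 1) : ℝ) := rfl

lemma lazyS_le_xB (β : ℕ → ℝ) (x : ℝ) (n : ℕ) :
    lazyS β x n ≤ xB (shiftBase β (n + 1)) := by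
  cases n with
  | zero =>
    have h := Int.le_ceil (β 0 * x - xB (shiftBase β 1))
    simp only [lazyS]
    linarith
  | succ n =>
    have h := Int.le_ceil (β (n + 1) * lazyS β x n - xB (shiftBase β (n + 2)))
    simp only [lazyS]
    linarith

lemma xB_sub_one_lt_lazyS (β : ℕ → ℝ) (x : ℝ) (n : ℕ) :
    xB (shiftBase β (n + 1)) - 1 < lazyS β x n := by
  cases n with
  | zero =>
    have h := Int.ceil_lt_add_one (β 0 * x - xB (shiftBase β 1))
    simp only [lazyS]
    linarith
  | succ n =>
    have h := Int.ceil_lt_add_one (β (n + 1) * lazyS β x n - xB (shiftBase β (n + 2)))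
    simp only [lazyS]
    linarith

lemma prodUpTo_pos (β : ℕ → ℝ) (hβ : ∀ n, 1 < β n) (n : ℕ) : 0 < prodUpTo β n :=
  Finset.prod_pos fun i _ => lt_trans one_pos (hβ i)

/-- If the digits of `x` and `y` agree up to index `n`, the remainders differ by
`prodUpTo β n * (y - x)`. -/
lemma lazyS_sub_of_digits_eq (β : ℕ → ℝ) (x y : ℝ) (n : ℕ)
    (h : ∀ i ≤ n, lazyDigit β x i = lazyDigit β y i) :
    lazyS β y n - lazyS β x n = prodUpTo β n * (y - x) := by
  induction n with
  | zero =>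
    have h0 := h 0 le_rfl
    rw [lazyS_zero_eq, lazyS_zero_eq, h0]
    simp only [prodUpTo]
    rw [Finset.prod_range_one]
    ring
  | succ n ih =>
    have hn := ih fun i hi => h i (Nat.le_succ_of_le hi)
    have hd := h (n + 1) le_rfl
    rw [lazyS_succ_eq, lazyS_succ_eq, hd]
    have : prodUpTo β (n + 1) = prodUpTo β n * β (n + 1) := by
      simp only [prodUpTo, Finset.prod_range_succ]
    rw [this]
    linear_combination β (n + 1) * hn

/-- Monotonicity of the lazy digit at index `n`, given agreement below `n`. -/
lemma lazyDigit_mono (β : ℕ → ℝ) (hβ : ∀ n, 1 < β n) (x y : ℝ) (hxy : x ≤ y) (n : ℕ)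
    (h : ∀ i < n, lazyDigit β x i = lazyDigit β y i) :
    lazyDigit β x n ≤ lazyDigit β y n := by
  cases n with
  | zero =>
    apply Int.ceil_le_ceil
    have hb := hβ 0
    nlinarith
  | succ n =>
    have hs : lazyS β x n ≤ lazyS β y n := by
      have hdiff := lazyS_sub_of_digits_eq β x y n
        (fun i hi => h i (Nat.lt_succ_of_le hi))
      have hP := prodUpTo_pos β hβ n
      nlinarith
    apply Int.ceil_le_ceil
    have hb := hβ (n + 1)
    nlinarith

lemma lexLt_asymm {a b : ℕ → ℤ} (h1 : lexLt a b) (h2 : lexLt b a) : False := by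
  obtain ⟨k, hk, hlt⟩ := h1
  obtain ⟨k', hk', hlt'⟩ := h2
  rcases lt_trichotomy k k' with h | h | h
  · exact absurd ((hk' k h).symm) (ne_of_lt hlt)
  · subst h; exact absurd (hlt.trans hlt') (lt_irrefl _)
  · exact absurd (hk k' h) (ne_of_gt hlt')

/-- Forward direction: `x < y` implies the lazy expansions are lexicographically ordered. -/
lemma lazy_lt_of_lt (β : ℕ → ℝ) (hβ : IsCantorBase β) (x y : ℝ) (hxy : x < y) :
    lexLt (lazyDigit β x) (lazyDigit β y) := by
  have hpos : (0 : ℝ) < y - x := sub_pos.mpr hxy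
  -- the digits cannot all agree
  have hne : ∃ n, lazyDigit β x n ≠ lazyDigit β y n := by
    by_contra hall
    push_neg at hall
    -- products times (y - x) tend to infinity
    have hT : Tendsto (fun n => prodUpTo β n) atTop atTop :=
      hβ.prod_tendsto.comp (tendsto_add_atTop_nat 1)
    have hT2 : Tendsto (fun n => prodUpTo β n * (y - x)) atTop atTop :=
      hT.atTop_mul_const hpos
    obtain ⟨n, hn⟩ := (hT2.eventually_ge_atTop 2).exists
    have hdiff := lazyS_sub_of_digits_eq β x y n (fun i _ => hall i)
    have h1 := lazyS_le_xB β y n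
    have h2 := xB_sub_one_lt_lazyS β x n
    linarith
  classical
  refine ⟨Nat.find hne, fun i hi => ?_, ?_⟩
  · have := Nat.find_min hne hi
    simpa using this
  · have hle := lazyDigit_mono β hβ.one_lt x y hxy.le (Nat.find hne)
      (fun i hi => by simpa using Nat.find_min hne hi)
    exact lt_of_le_of_ne hle (Nat.find_spec hne)

/-- the lazy expansion map is increasing on `(x_β−1, x_β]`. -/
theorem lazy_increasing (β : ℕ → ℝ) (hβ : IsCantorBase β) (hx : XBSummable β) :
    ∀ x ∈ Set.Ioc (xB β - 1) (xB β), ∀ y ∈ Set.Ioc (xB β - 1) (xB β),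
      (x < y ↔ lexLt (lazyDigit β x) (lazyDigit β y)) := by
  intro x _ y _
  constructor
  · exact fun h => lazy_lt_of_lt β hβ x y h
  · intro h
    rcases lt_trichotomy x y with hlt | heq | hgt
    · exact hlt
    · subst heq
      obtain ⟨k, _, hk⟩ := h
      exact absurd hk (lt_irrefl _)
    · exact absurd h (fun h' => lexLt_asymm h' (lazy_lt_of_lt β hβ y x hgt))
end

section
/- Let β=(β_n)_{n∈ℕ} be a Cantor base with x_β<+∞. The quasi-lazy expansion ℓ*_β(x_β−1) is a β-representation of x_β−1, i.e., val_β(ℓ*_β(x_β−1))=x_β−1. -/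
open Filter Topology

namespace QLAux

/-- Product `β_0 ⋯ β_{n-1}` (with `PP β 0 = 1`). -/
noncomputable def PP (β : ℕ → ℝ) (n : ℕ) : ℝ := ∏ i ∈ Finset.range n, β i

/-- The general term of the series defining `x_β`. -/
noncomputable def tt (β : ℕ → ℝ) (n : ℕ) : ℝ := ((⌈β n⌉ : ℝ) - 1) / prodUpTo β n

/-- The tail of the series defining `x_β`. -/
noncomputable def Tl (β : ℕ → ℝ) (n : ℕ) : ℝ := ∑' m, tt β (m + n)

variable {β : ℕ → ℝ}

lemma PP_pos (hβ : IsCantorBase β) (n : ℕ) : 0 < PP β n :=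
  Finset.prod_pos fun i _ => lt_trans one_pos (hβ.one_lt i)

lemma prod_pos (hβ : IsCantorBase β) (n : ℕ) : 0 < prodUpTo β n := PP_pos hβ (n + 1)

lemma prodUpTo_eq_PP (n : ℕ) : prodUpTo β n = PP β (n + 1) := rfl

lemma prod_succ (n : ℕ) : prodUpTo β (n + 1) = prodUpTo β n * β (n + 1) :=
  Finset.prod_range_succ β (n + 1)

lemma summable_tt (hx : XBSummable β) : Summable (tt β) := hx

lemma tt_nonneg (hβ : IsCantorBase β) (n : ℕ) : 0 ≤ tt β n := by
  apply div_nonneg _ (prod_pos hβ n).le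
  have h1 : (β n : ℝ) ≤ (⌈β n⌉ : ℝ) := Int.le_ceil _
  have := hβ.one_lt n
  linarith

lemma summable_tail (hx : XBSummable β) (n : ℕ) : Summable (fun m => tt β (m + n)) :=
  (summable_nat_add_iff n).mpr hx

lemma Tl_nonneg (hβ : IsCantorBase β) (hx : XBSummable β) (n : ℕ) : 0 ≤ Tl β n :=
  tsum_nonneg fun m => tt_nonneg hβ _

lemma Tl_tendsto (hx : XBSummable β) : Filter.Tendsto (Tl β) Filter.atTop (nhds 0) := by
  have h : ∀ n, Tl β n = (∑' m, tt β m) - ∑ i ∈ Finset.range n, tt β i := by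
    intro n
    have := Summable.sum_add_tsum_nat_add (f := tt β) n hx
    unfold Tl
    linarith
  have h2 : Filter.Tendsto (fun n => (∑' m, tt β m) - ∑ i ∈ Finset.range n, tt β i)
      Filter.atTop (nhds ((∑' m, tt β m) - (∑' m, tt β m))) :=
    Filter.Tendsto.const_sub _ hx.hasSum.tendsto_sum_nat
  simpa [← h] using h2

lemma prod_tendsto (hβ : IsCantorBase β) :
    Filter.Tendsto (prodUpTo β) Filter.atTop Filter.atTop :=
  hβ.prod_tendsto.comp (tendsto_add_atTop_nat 1)

lemma xB_shift (hβ : IsCantorBase β) (n : ℕ) : xB (shiftBase β n) = PP β n * Tl β n := by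
  have hPPn := (PP_pos hβ n).ne'
  have hp : ∀ m, prodUpTo (shiftBase β n) m = prodUpTo β (n + m) / PP β n := by
    intro m
    rw [eq_div_iff hPPn]
    have h := Finset.prod_range_add β n (m + 1)
    have h1 : prodUpTo (shiftBase β n) m = ∏ i ∈ Finset.range (m + 1), β (n + i) := rfl
    have h2 : prodUpTo β (n + m) = ∏ i ∈ Finset.range (n + (m + 1)), β i := rfl
    rw [h1, h2, h, mul_comm]
    rfl
  have hterm : ∀ m, ((⌈shiftBase β n m⌉ : ℝ) - 1) / prodUpTo (shiftBase β n) m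
      = PP β n * tt β (n + m) := by
    intro m
    rw [hp m]
    have hpr := (prod_pos hβ (n + m)).ne'
    show ((⌈β (n + m)⌉ : ℝ) - 1) / (prodUpTo β (n + m) / PP β n) = _
    unfold tt
    field_simp
  unfold xB
  calc (∑' m, ((⌈shiftBase β n m⌉ : ℝ) - 1) / prodUpTo (shiftBase β n) m)
      = ∑' m, PP β n * tt β (n + m) := by exact tsum_congr hterm
    _ = PP β n * ∑' m, tt β (n + m) := tsum_mul_left
    _ = PP β n * Tl β n := by
        congr 1
        apply tsum_congr
        intro m
        rw [Nat.add_comm]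

lemma Tl_succ (hx : XBSummable β) (n : ℕ) : Tl β n = tt β n + Tl β (n + 1) := by
  have h := Summable.tsum_eq_zero_add (summable_tail hx n)
  unfold Tl
  rw [h]
  congr 1
  · simp
  · apply tsum_congr
    intro m
    congr 1
    omega

lemma xB_rec (hβ : IsCantorBase β) (hx : XBSummable β) (n : ℕ) :
    β n * xB (shiftBase β n) = ((⌈β n⌉ : ℝ) - 1) + xB (shiftBase β (n + 1)) := by
  rw [xB_shift hβ n, xB_shift hβ (n + 1), Tl_succ hx n]
  have hPP1 : PP β (n + 1) = PP β n * β n := Finset.prod_range_succ β n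
  have htt : PP β (n + 1) * tt β n = (⌈β n⌉ : ℝ) - 1 := by
    unfold tt
    rw [prodUpTo_eq_PP]
    field_simp [(PP_pos hβ (n + 1)).ne']
  calc β n * (PP β n * (tt β n + Tl β (n + 1)))
      = PP β (n + 1) * tt β n + PP β (n + 1) * Tl β (n + 1) := by rw [hPP1]; ring
    _ = ((⌈β n⌉ : ℝ) - 1) + PP β (n + 1) * Tl β (n + 1) := by rw [htt]

lemma ceil_sandwich (y X : ℝ) : X - 1 < y - (⌈y - X⌉ : ℝ) ∧ y - (⌈y - X⌉ : ℝ) ≤ X := by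
  have h1 := Int.le_ceil (y - X)
  have h2 := Int.ceil_lt_add_one (y - X)
  constructor <;> linarith

lemma lazyS_bounds (x : ℝ) (n : ℕ) :
    xB (shiftBase β (n + 1)) - 1 < lazyS β x n ∧ lazyS β x n ≤ xB (shiftBase β (n + 1)) := by
  cases n with
  | zero => exact ceil_sandwich (β 0 * x) (xB (shiftBase β 1))
  | succ n => exact ceil_sandwich (β (n + 1) * lazyS β x n) (xB (shiftBase β (n + 2)))

lemma digit_aux (hβ : IsCantorBase β) (hx : XBSummable β) (n : ℕ) (b : ℝ)
    (hb1 : xB (shiftBase β n) - 1 < b) (hb2 : b ≤ xB (shiftBase β n)) :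
    0 ≤ ⌈β n * b - xB (shiftBase β (n + 1))⌉ ∧
      ⌈β n * b - xB (shiftBase β (n + 1))⌉ ≤ ⌈β n⌉ - 1 := by
  have hrec := xB_rec hβ hx n
  have hβn : (0 : ℝ) < β n := lt_trans one_pos (hβ.one_lt n)
  have hceil : (β n : ℝ) ≤ (⌈β n⌉ : ℝ) := Int.le_ceil _
  constructor
  · have : (-1 : ℤ) < ⌈β n * b - xB (shiftBase β (n + 1))⌉ := by
      rw [Int.lt_ceil]
      have h1 : β n * (xB (shiftBase β n) - 1) < β n * b := by
        exact (mul_lt_mul_iff_right₀ hβn).mpr hb1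
      push_cast
      nlinarith
    omega
  · rw [Int.ceil_le]
    have h1 : β n * b ≤ β n * xB (shiftBase β n) := (mul_le_mul_iff_right₀ hβn).mpr hb2
    push_cast
    linarith

lemma shift_zero : shiftBase β 0 = β := funext fun m => by simp [shiftBase]

lemma digit_valid (hβ : IsCantorBase β) (hx : XBSummable β) {x : ℝ}
    (hx1 : x ∈ Set.Ioc (xB β - 1) (xB β)) : validWord β (lazyDigit β x) := by
  intro n
  cases n with
  | zero =>
    have h := digit_aux hβ hx 0 x (by rw [shift_zero]; exact hx1.1) (by rw [shift_zero]; exact hx1.2)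
    exact h
  | succ n =>
    have hb := lazyS_bounds (β := β) x n
    exact digit_aux hβ hx (n + 1) (lazyS β x n) hb.1 hb.2

lemma telescope (hβ : IsCantorBase β) (x : ℝ) (n : ℕ) :
    x = (∑ k ∈ Finset.range (n + 1), (lazyDigit β x k : ℝ) / prodUpTo β k)
        + lazyS β x n / prodUpTo β n := by
  induction n with
  | zero =>
    have hp0 : prodUpTo β 0 = β 0 := by simp [prodUpTo]
    have hβ0 : (0 : ℝ) < β 0 := lt_trans one_pos (hβ.one_lt 0)
    have hd : (lazyDigit β x 0 : ℝ) + lazyS β x 0 = β 0 * x := by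
      show ((⌈β 0 * x - xB (shiftBase β 1)⌉ : ℝ))
          + (β 0 * x - (⌈β 0 * x - xB (shiftBase β 1)⌉ : ℝ)) = β 0 * x
      ring
    rw [Finset.sum_range_one, hp0]
    field_simp
    linarith
  | succ n ih =>
    have hβn : (0 : ℝ) < β (n + 1) := lt_trans one_pos (hβ.one_lt (n + 1))
    have hpn : (0 : ℝ) < prodUpTo β n := prod_pos hβ n
    have hps : prodUpTo β (n + 1) = prodUpTo β n * β (n + 1) := prod_succ n
    have hd : (lazyDigit β x (n + 1) : ℝ) + lazyS β x (n + 1) = β (n + 1) * lazyS β x n := by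
      show ((⌈β (n + 1) * lazyS β x n - xB (shiftBase β (n + 2))⌉ : ℝ))
          + (β (n + 1) * lazyS β x n - (⌈β (n + 1) * lazyS β x n - xB (shiftBase β (n + 2))⌉ : ℝ))
          = β (n + 1) * lazyS β x n
      ring
    rw [Finset.sum_range_succ]
    have key : lazyS β x n / prodUpTo β n
        = (lazyDigit β x (n + 1) : ℝ) / prodUpTo β (n + 1) + lazyS β x (n + 1) / prodUpTo β (n + 1) := by
      rw [hps, ← add_div, hd]
      rw [mul_comm (prodUpTo β n) (β (n + 1))]
      rw [mul_div_mul_left _ _ hβn.ne']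
    calc x = (∑ k ∈ Finset.range (n + 1), (lazyDigit β x k : ℝ) / prodUpTo β k)
            + lazyS β x n / prodUpTo β n := ih
      _ = _ := by rw [key]; ring

lemma rem_tendsto (hβ : IsCantorBase β) (hx : XBSummable β) (x : ℝ) :
    Filter.Tendsto (fun n => lazyS β x n / prodUpTo β n) Filter.atTop (nhds 0) := by
  have hTl : Filter.Tendsto (fun n => Tl β (n + 1)) Filter.atTop (nhds 0) :=
    (Tl_tendsto hx).comp (tendsto_add_atTop_nat 1)
  have hinv : Filter.Tendsto (fun n => (prodUpTo β n)⁻¹) Filter.atTop (nhds 0) :=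
    (prod_tendsto hβ).inv_tendsto_atTop
  have hlow : Filter.Tendsto (fun n => Tl β (n + 1) - (prodUpTo β n)⁻¹) Filter.atTop (nhds 0) := by
    have := hTl.sub hinv
    simpa using this
  apply tendsto_of_tendsto_of_tendsto_of_le_of_le' hlow hTl
  · filter_upwards with n
    have hpn : (0 : ℝ) < prodUpTo β n := prod_pos hβ n
    have hb := (lazyS_bounds (β := β) x n).1
    have hX : xB (shiftBase β (n + 1)) = prodUpTo β n * Tl β (n + 1) := xB_shift hβ (n + 1)
    have h1 : prodUpTo β n * Tl β (n + 1) - 1 ≤ lazyS β x n := by rw [← hX]; linarith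
    have h2 : (prodUpTo β n * Tl β (n + 1) - 1) / prodUpTo β n ≤ lazyS β x n / prodUpTo β n := by
      gcongr
    have h3 : (prodUpTo β n * Tl β (n + 1) - 1) / prodUpTo β n
        = Tl β (n + 1) - (prodUpTo β n)⁻¹ := by
      field_simp
    linarith
  · filter_upwards with n
    have hpn : (0 : ℝ) < prodUpTo β n := prod_pos hβ n
    have hb := (lazyS_bounds (β := β) x n).2
    have hX : xB (shiftBase β (n + 1)) = prodUpTo β n * Tl β (n + 1) := xB_shift hβ (n + 1)
    rw [hX] at hb
    have h2 : lazyS β x n / prodUpTo β n ≤ (prodUpTo β n * Tl β (n + 1)) / prodUpTo β n := by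
      gcongr
    have h3 : (prodUpTo β n * Tl β (n + 1)) / prodUpTo β n = Tl β (n + 1) := by
      rw [mul_comm]
      exact mul_div_cancel_right₀ _ hpn.ne'
    linarith

lemma summable_of_valid (hβ : IsCantorBase β) (hx : XBSummable β) {a : ℕ → ℤ}
    (ha : validWord β a) : Summable (fun n => (a n : ℝ) / prodUpTo β n) := by
  apply Summable.of_nonneg_of_le _ _ (summable_tt hx)
  · intro n
    have := (ha n).1
    have hpn := prod_pos hβ n
    positivity
  · intro n
    have h := (ha n).2
    have hpn := prod_pos hβ n
    have h2 : (a n : ℝ) ≤ (⌈β n⌉ : ℝ) - 1 := by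
      have h3 : ((a n : ℤ) : ℝ) ≤ ((⌈β n⌉ - 1 : ℤ) : ℝ) := by exact_mod_cast h
      push_cast at h3
      linarith
    exact div_le_div_of_nonneg_right h2 hpn.le

lemma val_lazy (hβ : IsCantorBase β) (hx : XBSummable β) {x : ℝ}
    (hx1 : x ∈ Set.Ioc (xB β - 1) (xB β)) : valB β (lazyDigit β x) = x := by
  have hvalid := digit_valid hβ hx hx1
  have hsum := summable_of_valid hβ hx hvalid
  have h1 : Filter.Tendsto
      (fun n => ∑ k ∈ Finset.range (n + 1), (lazyDigit β x k : ℝ) / prodUpTo β k)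
      Filter.atTop (nhds x) := by
    have heq : ∀ n, ∑ k ∈ Finset.range (n + 1), (lazyDigit β x k : ℝ) / prodUpTo β k
        = x - lazyS β x n / prodUpTo β n := by
      intro n
      have := telescope hβ x n
      linarith
    have h2 : Filter.Tendsto (fun n => x - lazyS β x n / prodUpTo β n)
        Filter.atTop (nhds (x - 0)) := Filter.Tendsto.const_sub _ (rem_tendsto hβ hx x)
    simp only [sub_zero] at h2
    simpa [heq] using h2
  have h2 : Filter.Tendsto
      (fun n => ∑ k ∈ Finset.range (n + 1), (lazyDigit β x k : ℝ) / prodUpTo β k)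
      Filter.atTop (nhds (valB β (lazyDigit β x))) :=
    hsum.hasSum.tendsto_sum_nat.comp (tendsto_add_atTop_nat 1)
  exact tendsto_nhds_unique h2 h1

end QLAux

/-- the quasi-lazy expansion `ℓ*_β(x_β−1)` is a β-representation of `x_β−1`. -/
theorem quasiLazy_val (β : ℕ → ℝ) (hβ : IsCantorBase β) (hx : XBSummable β)
    (ℓstar : ℕ → ℤ)
    (hl : Tendsto (lazyDigit β) (nhdsWithin (xB β - 1) (Set.Ioi (xB β - 1))) (nhds ℓstar)) :
    valB β ℓstar = xB β - 1 := by
  classical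
  set L := nhdsWithin (xB β - 1) (Set.Ioi (xB β - 1)) with hL
  have hcoord : ∀ n, ∀ᶠ x in L, lazyDigit β x n = ℓstar n := by
    intro n
    have hc : Tendsto (fun x => lazyDigit β x n) L (nhds (ℓstar n)) :=
      ((continuous_apply n).tendsto ℓstar).comp hl
    rw [nhds_discrete ℤ] at hc
    exact tendsto_pure.mp hc
  have hxlt : xB β - 1 < xB β := by linarith
  have hmem : ∀ᶠ x in L, x ∈ Set.Ioc (xB β - 1) (xB β) := by
    have h1 : ∀ᶠ x in L, x ∈ Set.Ioi (xB β - 1) := self_mem_nhdsWithin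
    have h2 : ∀ᶠ x in L, x < xB β := nhdsWithin_le_nhds (Iio_mem_nhds hxlt)
    filter_upwards [h1, h2] with x hx1 hx2
    exact ⟨hx1, hx2.le⟩
  have hvalid : validWord β ℓstar := by
    intro n
    obtain ⟨x, hx1, hx2⟩ := ((hcoord n).and hmem).exists
    rw [← hx1]
    exact QLAux.digit_valid hβ hx hx2 n
  have hsumℓ : Summable (fun n => (ℓstar n : ℝ) / prodUpTo β n) :=
    QLAux.summable_of_valid hβ hx hvalid
  have key : ∀ ε > (0 : ℝ), |valB β ℓstar - (xB β - 1)| ≤ ε := by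
    intro ε hε
    obtain ⟨N, hN⟩ := ((QLAux.Tl_tendsto hx).eventually_lt_const (show (0:ℝ) < ε/2 by linarith)).exists
    have hdig : ∀ᶠ x in L, ∀ i ∈ Finset.range N, lazyDigit β x i = ℓstar i :=
      (eventually_all_finset (Finset.range N)).mpr (fun i _ => hcoord i)
    have hclose : ∀ᶠ x in L, x < xB β - 1 + ε / 2 :=
      nhdsWithin_le_nhds (Iio_mem_nhds (by linarith))
    obtain ⟨x, hxd, hxm, hxc⟩ := (hdig.and (hmem.and hclose)).exists
    have hval : valB β (lazyDigit β x) = x := QLAux.val_lazy hβ hx hxm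
    have hvalidx := QLAux.digit_valid hβ hx hxm
    have hsumx := QLAux.summable_of_valid hβ hx hvalidx
    set g : ℕ → ℝ := fun n => ((ℓstar n : ℝ) - (lazyDigit β x n : ℝ)) / prodUpTo β n with hg
    have hgsum : Summable g := by
      have := hsumℓ.sub hsumx
      simpa [hg, sub_div] using this
    have hdiff : valB β ℓstar - x = ∑' n, g n := by
      rw [← hval]
      unfold valB
      rw [← Summable.tsum_sub hsumℓ hsumx]
      apply tsum_congr
      intro n
      simp only [hg]
      exact (sub_div _ _ _).symm
    have hgbound : ∀ n, |g n| ≤ QLAux.tt β n := by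
      intro n
      have hpn := QLAux.prod_pos hβ n
      have h1 := (hvalid n).1
      have h2 := (hvalid n).2
      have h3 := (hvalidx n).1
      have h4 := (hvalidx n).2
      have hc1 : (0:ℝ) ≤ (ℓstar n : ℝ) := by exact_mod_cast h1
      have hc2 : (ℓstar n : ℝ) ≤ (⌈β n⌉ : ℝ) - 1 := by
        have : ((ℓstar n : ℤ) : ℝ) ≤ ((⌈β n⌉ - 1 : ℤ) : ℝ) := by exact_mod_cast h2
        push_cast at this; linarith
      have hc3 : (0:ℝ) ≤ (lazyDigit β x n : ℝ) := by exact_mod_cast h3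
      have hc4 : (lazyDigit β x n : ℝ) ≤ (⌈β n⌉ : ℝ) - 1 := by
        have : ((lazyDigit β x n : ℤ) : ℝ) ≤ ((⌈β n⌉ - 1 : ℤ) : ℝ) := by exact_mod_cast h4
        push_cast at this; linarith
      simp only [hg]
      rw [abs_div, abs_of_pos hpn]
      unfold QLAux.tt
      apply div_le_div_of_nonneg_right _ hpn.le
      rw [abs_le]
      constructor <;> linarith
    have htail : |∑' n, g n| ≤ QLAux.Tl β N := by
      have hsplit := Summable.sum_add_tsum_nat_add (f := g) N hgsum
      have hzero : ∑ i ∈ Finset.range N, g i = 0 := by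
        apply Finset.sum_eq_zero
        intro i hi
        rw [hg]
        simp [hxd i hi]
      have heq : ∑' n, g n = ∑' i, g (i + N) := by linarith [hsplit, hzero]
      rw [heq]
      have hgt : Summable (fun i => g (i + N)) := (summable_nat_add_iff N).mpr hgsum
      have htt : Summable (fun i => QLAux.tt β (i + N)) := QLAux.summable_tail hx N
      rw [abs_le]
      constructor
      · have h := Summable.tsum_le_tsum (fun i => (neg_le_of_abs_le (hgbound (i + N)) : -(QLAux.tt β (i+N)) ≤ g (i+N))) htt.neg hgt
        rw [tsum_neg] at h
        exact h
      · exact Summable.tsum_le_tsum (fun i => le_of_abs_le (hgbound (i + N))) hgt htt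
    have hxb : 0 < x - (xB β - 1) ∧ x - (xB β - 1) < ε / 2 := by
      constructor
      · have := hxm.1; linarith
      · linarith
    have habs : |valB β ℓstar - (xB β - 1)| ≤ |valB β ℓstar - x| + |x - (xB β - 1)| := by
      have : valB β ℓstar - (xB β - 1) = (valB β ℓstar - x) + (x - (xB β - 1)) := by ring
      rw [this]
      exact abs_add_le _ _
    have h1 : |valB β ℓstar - x| ≤ QLAux.Tl β N := by rw [hdiff]; exact htail
    have h2 : |x - (xB β - 1)| < ε / 2 := by
      rw [abs_of_pos hxb.1]; exact hxb.2
    linarith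
  by_contra hne
  have h0 : 0 < |valB β ℓstar - (xB β - 1)| := abs_pos.mpr (sub_ne_zero.mpr hne)
  have := key (|valB β ℓstar - (xB β - 1)| / 2) (by linarith)
  linarith
end

section
/- Let β=(β_n)_{n∈ℕ} be a Cantor base with x_β<+∞. The quasi-lazy β-expansion ℓ*_β(x_β−1) is the lexicographically least β-representation of x_β−1 among infinite words a with a_n∈[[0,⌈β_n⌉−1]] for all n∈ℕ that are not ultimately maximal: it is itself such a representation and is not ultimately maximal, and every β-representation a of x_β−1 with a_n∈[[0,⌈β_n⌉−1]] for all n satisfying a <_lex ℓ*_β(x_β−1) is ultimately maximal. -/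
open Filter Topology

set_option linter.unusedSectionVars false

namespace QL

variable (β : ℕ → ℝ)

noncomputable def R (n : ℕ) : ℝ := ∏ i ∈ Finset.range n, β i

noncomputable def term (n : ℕ) : ℝ := ((⌈β n⌉ : ℝ) - 1) / R β (n + 1)

noncomputable def T (n : ℕ) : ℝ := ∑' m, term β (m + n)

variable {β}

section basic
variable (hβ : IsCantorBase β)
include hβ

lemma R_pos (n : ℕ) : 0 < R β n :=
  Finset.prod_pos fun i _ => lt_trans one_pos (hβ.one_lt i)

lemma one_le_R (n : ℕ) : 1 ≤ R β n := by
  unfold R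
  calc (1:ℝ) = ∏ _i ∈ Finset.range n, 1 := by simp
    _ ≤ ∏ i ∈ Finset.range n, β i :=
        Finset.prod_le_prod (by simp) (fun i _ => (hβ.one_lt i).le)

omit hβ in
lemma R_succ (n : ℕ) : R β (n + 1) = R β n * β n := Finset.prod_range_succ β n

lemma ceil_sub_one_nonneg (n : ℕ) : (0:ℝ) ≤ (⌈β n⌉ : ℝ) - 1 :=
  sub_nonneg.mpr (le_trans (hβ.one_lt n).le (Int.le_ceil (β n)))

lemma term_nonneg (n : ℕ) : 0 ≤ term β n :=
  div_nonneg (ceil_sub_one_nonneg hβ n) (R_pos hβ (n+1)).le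

lemma R_tendsto : Tendsto (R β) atTop atTop := hβ.prod_tendsto

lemma inv_R_tendsto : Tendsto (fun n => (R β n)⁻¹) atTop (𝓝 0) :=
  tendsto_inv_atTop_zero.comp (R_tendsto hβ)

end basic

lemma prodUpTo_eq (n : ℕ) : prodUpTo β n = R β (n + 1) := rfl

section summable
variable (hβ : IsCantorBase β) (hx : XBSummable β)
include hβ hx

lemma summable_term : Summable (term β) := hx

lemma summable_term_add (n : ℕ) : Summable fun m => term β (m + n) :=
  (summable_nat_add_iff n).mpr hx

lemma T_nonneg (n : ℕ) : 0 ≤ T β n :=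
  tsum_nonneg fun m => term_nonneg hβ (m + n)

lemma T_succ (n : ℕ) : T β n = term β n + T β (n + 1) := by
  unfold T
  rw [Summable.tsum_eq_zero_add (summable_term_add hβ hx n)]
  simp only [zero_add]
  congr 1
  exact tsum_congr fun m => by rw [show m + 1 + n = m + (n + 1) by omega]

lemma T_tendsto : Tendsto (T β) atTop (𝓝 0) :=
  tendsto_sum_nat_add (term β)

lemma one_div_R_le_T (n : ℕ) : 1 / R β n ≤ T β n := by
  -- telescoping comparison
  set g : ℕ → ℝ := fun m => 1 / R β (n + m) - 1 / R β (n + m + 1) with hg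
  have hg_eq : ∀ m, g m = (β (n + m) - 1) / R β (n + m + 1) := by
    intro m
    have hb := hβ.one_lt (n + m)
    have hR := R_pos hβ (n + m)
    rw [hg]
    field_simp [R_succ]
    rw [R_succ]; ring
  have hg_nonneg : ∀ m, 0 ≤ g m := by
    intro m
    rw [hg_eq]
    exact div_nonneg (by linarith [hβ.one_lt (n+m)]) (R_pos hβ (n+m+1)).le
  have hg_le : ∀ m, g m ≤ term β (m + n) := by
    intro m
    rw [hg_eq, show m + n = n + m by omega, term]
    gcongr
    · exact (R_pos hβ (n+m+1)).le
    · linarith [Int.le_ceil (β (n + m))]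
  have hgsum : HasSum g (1 / R β n) := by
    have hsummable : Summable g :=
      Summable.of_nonneg_of_le hg_nonneg hg_le (summable_term_add hβ hx n)
    rw [hsummable.hasSum_iff_tendsto_nat]
    have hps : ∀ M, ∑ m ∈ Finset.range M, g m = 1 / R β n - 1 / R β (n + M) := by
      intro M
      have := Finset.sum_range_sub' (fun m => 1 / R β (n + m)) M
      simpa [hg, add_assoc] using this
    simp only [hps]
    have : Tendsto (fun M => 1 / R β (n + M)) atTop (𝓝 0) := by
      simp only [one_div]
      exact (inv_R_tendsto hβ).comp (by simpa [add_comm] using tendsto_add_atTop_nat n)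
    simpa using tendsto_const_nhds.sub this
  calc 1 / R β n = ∑' m, g m := hgsum.tsum_eq.symm
    _ ≤ T β n := Summable.tsum_le_tsum hg_le hgsum.summable (summable_term_add hβ hx n)

end summable

section xb
variable (hβ : IsCantorBase β) (hx : XBSummable β)
include hβ hx

lemma xB_shift (n : ℕ) : xB (shiftBase β n) = R β n * T β n := by
  unfold xB T
  rw [← tsum_mul_left]
  apply tsum_congr
  intro m
  have h2 : R β (n + (m + 1)) = R β n * prodUpTo (shiftBase β n) m :=
    Finset.prod_range_add β n (m + 1)
  have h1 : prodUpTo (shiftBase β n) m = R β (m + n + 1) / R β n := by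
    rw [show m + n + 1 = n + (m + 1) by omega, h2]
    exact (mul_div_cancel_left₀ _ (R_pos hβ n).ne').symm
  rw [h1]
  have h5 : shiftBase β n m = β (m + n) := by simp [shiftBase, add_comm]
  rw [h5, term]
  have h3 := (R_pos hβ n).ne'
  have h4 := (R_pos hβ (m + n + 1)).ne'
  field_simp

omit hβ hx in
lemma xB_eq_T0 : xB β = T β 0 := by
  unfold xB T
  exact tsum_congr fun n => by rw [term, prodUpTo_eq]; norm_num

lemma xB_key (n : ℕ) : β n * xB (shiftBase β n) = ((⌈β n⌉ : ℝ) - 1) + xB (shiftBase β (n + 1)) := by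
  rw [xB_shift hβ hx n, xB_shift hβ hx (n + 1), T_succ hβ hx n, term]
  have h1 := (R_pos hβ n).ne'
  have h2 : R β (n + 1) = R β n * β n := R_succ n
  have h3 : β n ≠ 0 := (lt_trans one_pos (hβ.one_lt n)).ne'
  rw [h2]
  field_simp

lemma one_le_xB_shift (n : ℕ) : 1 ≤ xB (shiftBase β n) := by
  rw [xB_shift hβ hx n]
  have h1 := R_pos hβ n
  have h2 := one_div_R_le_T hβ hx n
  calc (1:ℝ) = R β n * (1 / R β n) := by field_simp
    _ ≤ R β n * T β n := by gcongr

end xb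

lemma lazyS_bounds (x : ℝ) (n : ℕ) :
    xB (shiftBase β (n + 1)) - 1 < lazyS β x n ∧ lazyS β x n ≤ xB (shiftBase β (n + 1)) := by
  cases n with
  | zero =>
    set y := β 0 * x - xB (shiftBase β 1) with hy
    have h1 : lazyS β x 0 = β 0 * x - (⌈y⌉ : ℝ) := rfl
    have h2 := Int.le_ceil y
    have h3 := Int.ceil_lt_add_one y
    constructor <;> [skip; skip] <;> rw [h1] <;> linarith
  | succ n =>
    set y := β (n + 1) * lazyS β x n - xB (shiftBase β (n + 2)) with hy
    have h1 : lazyS β x (n + 1) = β (n + 1) * lazyS β x n - (⌈y⌉ : ℝ) := rfl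
    have h2 := Int.le_ceil y
    have h3 := Int.ceil_lt_add_one y
    constructor <;> rw [h1] <;> linarith

section digits
variable (hβ : IsCantorBase β) (hx : XBSummable β)
include hβ hx

lemma lazyDigit_bounds {x : ℝ} (h1 : xB β - 1 < x) (h2 : x ≤ xB β) (n : ℕ) :
    0 ≤ lazyDigit β x n ∧ lazyDigit β x n ≤ ⌈β n⌉ - 1 := by
  have hβ0 : (0:ℝ) < β n := lt_trans one_pos (hβ.one_lt n)
  have hceil : β n ≤ (⌈β n⌉ : ℝ) := Int.le_ceil (β n)
  cases n with
  | zero =>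
    have hx0 : xB β = xB (shiftBase β 0) := by
      have : shiftBase β 0 = β := by
        funext m
        show β (0 + m) = β m
        rw [Nat.zero_add]
      rw [this]
    have hkey := xB_key hβ hx 0
    set y := β 0 * x - xB (shiftBase β 1) with hy
    have hd : lazyDigit β x 0 = ⌈y⌉ := rfl
    have hb0 : (0:ℝ) < β 0 := lt_trans one_pos (hβ.one_lt 0)
    have hyle : y ≤ (⌈β 0⌉ : ℝ) - 1 := by
      have : β 0 * x ≤ β 0 * xB (shiftBase β 0) := by
        rw [← hx0]; exact mul_le_mul_of_nonneg_left h2 hb0.le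
      rw [hy]; linarith
    have hygt : (-1 : ℝ) < y := by
      have : β 0 * (xB β - 1) < β 0 * x := mul_lt_mul_of_pos_left h1 hb0
      rw [hx0] at this
      have hc := Int.le_ceil (β 0)
      rw [hy]; nlinarith
    constructor
    · rw [hd]
      have : (-1 : ℤ) < ⌈y⌉ := Int.lt_ceil.mpr (by exact_mod_cast hygt)
      omega
    · rw [hd]
      rw [show ((⌈β 0⌉ : ℤ) - 1 : ℤ) = ⌈β 0⌉ - 1 from rfl]
      apply Int.ceil_le.mpr
      push_cast
      exact hyle
  | succ n =>
    have hkey := xB_key hβ hx (n + 1)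
    obtain ⟨hs1, hs2⟩ := lazyS_bounds (β := β) x n
    set y := β (n + 1) * lazyS β x n - xB (shiftBase β (n + 2)) with hy
    have hd : lazyDigit β x (n + 1) = ⌈y⌉ := rfl
    have hyle : y ≤ (⌈β (n + 1)⌉ : ℝ) - 1 := by
      have : β (n + 1) * lazyS β x n ≤ β (n + 1) * xB (shiftBase β (n + 1)) :=
        mul_le_mul_of_nonneg_left hs2 hβ0.le
      rw [hy]; linarith
    have hygt : (-1 : ℝ) < y := by
      have : β (n + 1) * (xB (shiftBase β (n + 1)) - 1) < β (n + 1) * lazyS β x n :=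
        mul_lt_mul_of_pos_left hs1 hβ0
      rw [hy]; nlinarith
    constructor
    · rw [hd]
      have : (-1 : ℤ) < ⌈y⌉ := Int.lt_ceil.mpr (by exact_mod_cast hygt)
      omega
    · rw [hd]
      apply Int.ceil_le.mpr
      push_cast
      exact hyle

end digits

section partialsum
variable (hβ : IsCantorBase β)
include hβ

lemma sum_lazyDigit (x : ℝ) (n : ℕ) :
    (∑ k ∈ Finset.range (n + 1), (lazyDigit β x k : ℝ) / R β (k + 1)) +
      lazyS β x n / R β (n + 1) = x := by
  induction n with
  | zero =>
    have hb0 : (0:ℝ) < β 0 := lt_trans one_pos (hβ.one_lt 0)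
    have hR1 : R β 1 = β 0 := by simp [R]
    have hs : lazyS β x 0 = β 0 * x - (lazyDigit β x 0 : ℝ) := rfl
    rw [Finset.sum_range_one, hR1, hs]
    field_simp
    ring
  | succ n ih =>
    have hb : (0:ℝ) < β (n + 1) := lt_trans one_pos (hβ.one_lt (n + 1))
    have hR : R β (n + 2) = R β (n + 1) * β (n + 1) := R_succ (n + 1)
    have hRpos := R_pos hβ (n + 1)
    have hs : lazyS β x (n + 1) =
        β (n + 1) * lazyS β x n - (lazyDigit β x (n + 1) : ℝ) := rfl
    have halg : (lazyDigit β x (n + 1) : ℝ) / (R β (n + 1) * β (n + 1)) +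
        (β (n + 1) * lazyS β x n - (lazyDigit β x (n + 1) : ℝ)) / (R β (n + 1) * β (n + 1)) =
        lazyS β x n / R β (n + 1) := by
      field_simp
      ring
    rw [Finset.sum_range_succ, hs, hR]
    linarith [ih, halg]

end partialsum

section valid
variable (hβ : IsCantorBase β) (hx : XBSummable β)
include hβ hx

lemma cast_valid_le {a : ℕ → ℤ} (ha : validWord β a) (n : ℕ) :
    (0:ℝ) ≤ (a n : ℝ) ∧ (a n : ℝ) ≤ (⌈β n⌉ : ℝ) - 1 := by
  obtain ⟨h1, h2⟩ := ha n
  constructor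
  · exact_mod_cast h1
  · have : ((a n : ℤ) : ℝ) ≤ ((⌈β n⌉ - 1 : ℤ) : ℝ) := by exact_mod_cast h2
    push_cast at this
    linarith

lemma valid_term_le {a : ℕ → ℤ} (ha : validWord β a) (n : ℕ) :
    (a n : ℝ) / R β (n + 1) ≤ term β n := by
  rw [term]
  gcongr
  · exact (R_pos hβ (n + 1)).le
  · exact (cast_valid_le hβ hx ha n).2

lemma valid_term_nonneg {a : ℕ → ℤ} (ha : validWord β a) (n : ℕ) :
    0 ≤ (a n : ℝ) / R β (n + 1) :=
  div_nonneg (cast_valid_le hβ hx ha n).1 (R_pos hβ (n + 1)).le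

lemma summable_valid {a : ℕ → ℤ} (ha : validWord β a) :
    Summable (fun n => (a n : ℝ) / R β (n + 1)) :=
  Summable.of_nonneg_of_le (valid_term_nonneg hβ hx ha) (valid_term_le hβ hx ha) hx

omit hβ hx in
lemma valB_eq {a : ℕ → ℤ} : valB β a = ∑' n, (a n : ℝ) / R β (n + 1) := by
  unfold valB
  exact tsum_congr fun n => by rw [prodUpTo_eq]

lemma valB_split {a : ℕ → ℤ} (ha : validWord β a) (n : ℕ) :
    valB β a = (∑ k ∈ Finset.range n, (a k : ℝ) / R β (k + 1)) +
      ∑' m, (a (m + n) : ℝ) / R β (m + n + 1) :=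
  (Summable.sum_add_tsum_nat_add n (summable_valid hβ hx ha)).symm

lemma valid_tail_nonneg {a : ℕ → ℤ} (ha : validWord β a) (n : ℕ) :
    0 ≤ ∑' m, (a (m + n) : ℝ) / R β (m + n + 1) :=
  tsum_nonneg fun m => valid_term_nonneg hβ hx ha (m + n)

lemma valid_tail_le {a : ℕ → ℤ} (ha : validWord β a) (n : ℕ) :
    ∑' m, (a (m + n) : ℝ) / R β (m + n + 1) ≤ T β n :=
  Summable.tsum_le_tsum (fun m => valid_term_le hβ hx ha (m + n))
    ((summable_nat_add_iff (f := fun k => (a k : ℝ) / R β (k + 1)) n).mpr (summable_valid hβ hx ha))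
    (summable_term_add hβ hx n)

end valid


end QL
/-- `ℓ*_β(x_β−1)` is the lexicographically least β-representation of
`x_β−1` with digits in `[[0,⌈β_n⌉-1]]` that is not ultimately maximal. -/
theorem quasiLazy_least_not_ultimately_maximal (β : ℕ → ℝ) (hβ : IsCantorBase β)
    (hx : XBSummable β) (ℓstar : ℕ → ℤ)
    (hl : Tendsto (lazyDigit β) (nhdsWithin (xB β - 1) (Set.Ioi (xB β - 1))) (nhds ℓstar)) :
    validWord β ℓstar ∧ valB β ℓstar = xB β - 1 ∧
    (¬ ∃ N : ℕ, ∀ n, N ≤ n → ℓstar n = ⌈β n⌉ - 1) ∧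
    ∀ a : ℕ → ℤ, validWord β a → valB β a = xB β - 1 → lexLt a ℓstar →
      ∃ N : ℕ, ∀ n, N ≤ n → a n = ⌈β n⌉ - 1 := by
  have hxb1 : xB β - 1 < xB β := by linarith
  have hcoord : ∀ n, ∀ᶠ x in 𝓝[>] (xB β - 1), lazyDigit β x n = ℓstar n := by
    intro n
    have h := tendsto_pi_nhds.mp hl n
    rw [nhds_discrete, tendsto_pure] at h
    exact h
  have hexists : ∀ n : ℕ, ∀ ε > (0:ℝ), ∃ x, (xB β - 1 < x ∧ x ≤ xB β) ∧ x < xB β - 1 + ε ∧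
      ∀ k ≤ n, lazyDigit β x k = ℓstar k := by
    intro n ε hε
    have h1 : ∀ᶠ x in 𝓝[>] (xB β - 1), ∀ k ∈ Finset.range (n + 1), lazyDigit β x k = ℓstar k :=
      Filter.eventually_all_finset (Finset.range (n + 1)) |>.mpr fun k _ => hcoord k
    have h2 : Set.Ioc (xB β - 1) (xB β) ∈ 𝓝[>] (xB β - 1) :=
      Ioc_mem_nhdsGT_of_mem ⟨le_refl _, hxb1⟩
    have h3 : Set.Ioo (xB β - 1) (xB β - 1 + ε) ∈ 𝓝[>] (xB β - 1) :=
      Ioo_mem_nhdsGT_of_mem ⟨le_refl _, by linarith⟩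
    obtain ⟨x, hx1, hx2⟩ := ((h1.and h2).and h3).exists
    exact ⟨x, ⟨hx1.2.1, hx1.2.2⟩, hx2.2, fun k hk =>
      hx1.1 k (Finset.mem_range.mpr (by omega))⟩
  -- Part A : validity
  have hvalid : validWord β ℓstar := by
    intro n
    obtain ⟨x, ⟨hx1, hx2⟩, -, hagree⟩ := hexists n 1 one_pos
    have h := QL.lazyDigit_bounds hβ hx hx1 hx2 n
    rwa [hagree n le_rfl] at h
  -- partial sums of ℓstar
  set P : ℕ → ℝ := fun n => ∑ k ∈ Finset.range (n + 1), (ℓstar k : ℝ) / QL.R β (k + 1)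
    with hPdef
  have hPbound : ∀ n : ℕ, ∀ ε > (0:ℝ), ∀ x : ℝ, xB β - 1 < x → x ≤ xB β → x < xB β - 1 + ε →
      (∀ k ≤ n, lazyDigit β x k = ℓstar k) →
      (xB β - 1) - QL.T β (n + 1) < P n ∧
        P n < (xB β - 1) - QL.T β (n + 1) + 1 / QL.R β (n + 1) + ε := by
    intro n ε hε x hx1 hx2 hx3 hagree
    have hsum := QL.sum_lazyDigit hβ x n
    have hagg : ∑ k ∈ Finset.range (n + 1), (lazyDigit β x k : ℝ) / QL.R β (k + 1) = P n :=
      Finset.sum_congr rfl fun k hk =>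
        by rw [hagree k (Nat.lt_succ_iff.mp (Finset.mem_range.mp hk))]
    obtain ⟨hs1, hs2⟩ := QL.lazyS_bounds (β := β) x n
    have hxs : xB (shiftBase β (n + 1)) = QL.R β (n + 1) * QL.T β (n + 1) :=
      QL.xB_shift hβ hx (n + 1)
    have hRpos := QL.R_pos hβ (n + 1)
    rw [hagg] at hsum
    rw [hxs] at hs1 hs2
    have hdiv1 : lazyS β x n / QL.R β (n + 1) ≤ QL.T β (n + 1) := by
      rw [div_le_iff₀ hRpos]; nlinarith
    have hdiv2 : QL.T β (n + 1) - 1 / QL.R β (n + 1) < lazyS β x n / QL.R β (n + 1) := by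
      rw [lt_div_iff₀ hRpos]
      have heq : (QL.T β (n + 1) - 1 / QL.R β (n + 1)) * QL.R β (n + 1) =
          QL.T β (n + 1) * QL.R β (n + 1) - 1 := by field_simp
      rw [heq]; nlinarith
    constructor <;> nlinarith
  have hP : ∀ n : ℕ, (xB β - 1) - QL.T β (n + 1) < P n ∧
      P n ≤ (xB β - 1) - QL.T β (n + 1) + 1 / QL.R β (n + 1) := by
    intro n
    constructor
    · obtain ⟨x, ⟨h1, h2⟩, h3, h4⟩ := hexists n 1 one_pos
      exact (hPbound n 1 one_pos x h1 h2 h3 h4).1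
    · apply le_of_forall_pos_le_add
      intro ε hε
      obtain ⟨x, ⟨h1, h2⟩, h3, h4⟩ := hexists n ε hε
      exact ((hPbound n ε hε x h1 h2 h3 h4).2).le
  -- Part B : value
  have hsummable := QL.summable_valid hβ hx hvalid
  have hTtend : Tendsto (fun n => QL.T β (n + 1)) atTop (𝓝 0) :=
    (QL.T_tendsto hβ hx).comp (tendsto_add_atTop_nat 1)
  have hRtend : Tendsto (fun n => 1 / QL.R β (n + 1)) atTop (𝓝 0) := by
    simp only [one_div]
    exact (QL.inv_R_tendsto hβ).comp (tendsto_add_atTop_nat 1)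
  have hPtend : Tendsto P atTop (𝓝 (xB β - 1)) := by
    have hlow : Tendsto (fun n => (xB β - 1) - QL.T β (n + 1)) atTop (𝓝 (xB β - 1)) := by
      simpa using tendsto_const_nhds.sub hTtend
    have hup : Tendsto (fun n => (xB β - 1) - QL.T β (n + 1) + 1 / QL.R β (n + 1))
        atTop (𝓝 (xB β - 1)) := by
      simpa using hlow.add hRtend
    exact tendsto_of_tendsto_of_tendsto_of_le_of_le hlow hup
      (fun n => (hP n).1.le) (fun n => (hP n).2)
  have hvalB : valB β ℓstar = xB β - 1 := by
    rw [QL.valB_eq (β := β)]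
    apply HasSum.tsum_eq
    rw [hsummable.hasSum_iff_tendsto_nat, ← tendsto_add_atTop_iff_nat 1]
    exact hPtend
  -- Part C : not ultimately maximal
  have hnotmax : ¬ ∃ N : ℕ, ∀ n, N ≤ n → ℓstar n = ⌈β n⌉ - 1 := by
    rintro ⟨N, hN⟩
    have hsplit := QL.valB_split hβ hx hvalid (N + 1)
    have htail : ∑' m, (ℓstar (m + (N + 1)) : ℝ) / QL.R β (m + (N + 1) + 1) =
        QL.T β (N + 1) := by
      apply tsum_congr
      intro m
      rw [hN (m + (N + 1)) (by omega), QL.term]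
      push_cast
      ring
    rw [hvalB, htail] at hsplit
    have hlow := (hP N).1
    have hPN : (∑ k ∈ Finset.range (N + 1), (ℓstar k : ℝ) / QL.R β (k + 1)) = P N := rfl
    rw [hPN] at hsplit
    linarith
  refine ⟨hvalid, hvalB, hnotmax, ?_⟩
  -- Part D : minimality
  intro a ha hval hlex
  obtain ⟨k, hagree, hlt⟩ := hlex
  refine ⟨k + 1, fun n hn => ?_⟩
  by_contra hne
  have hRk := QL.R_pos hβ (k + 1)
  have hRn := QL.R_pos hβ (n + 1)
  have hsplit_a := QL.valB_split hβ hx ha (k + 1)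
  have hsplit_l := QL.valB_split hβ hx hvalid (k + 1)
  rw [hval] at hsplit_a
  rw [hvalB] at hsplit_l
  have hPk : (∑ i ∈ Finset.range (k + 1), (ℓstar i : ℝ) / QL.R β (i + 1)) = P k := rfl
  rw [hPk] at hsplit_l
  -- partial sums comparison
  have hpart : (∑ i ∈ Finset.range (k + 1), (a i : ℝ) / QL.R β (i + 1)) ≤
      P k - 1 / QL.R β (k + 1) := by
    have hPk2 : P k = (∑ i ∈ Finset.range k, (ℓstar i : ℝ) / QL.R β (i + 1)) +
        (ℓstar k : ℝ) / QL.R β (k + 1) := Finset.sum_range_succ _ k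
    have hsame : ∑ i ∈ Finset.range k, (a i : ℝ) / QL.R β (i + 1) =
        ∑ i ∈ Finset.range k, (ℓstar i : ℝ) / QL.R β (i + 1) :=
      Finset.sum_congr rfl fun i hi => by rw [hagree i (Finset.mem_range.mp hi)]
    have hak : (a k : ℝ) ≤ (ℓstar k : ℝ) - 1 := by
      have h1 : a k + 1 ≤ ℓstar k := hlt
      have h2 : ((a k : ℤ) : ℝ) + 1 ≤ ((ℓstar k : ℤ) : ℝ) := by exact_mod_cast h1
      linarith
    have hdiv : (a k : ℝ) / QL.R β (k + 1) ≤
        (ℓstar k : ℝ) / QL.R β (k + 1) - 1 / QL.R β (k + 1) := by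
      rw [div_sub_div_same]
      gcongr
    rw [Finset.sum_range_succ, hsame]
    linarith
  -- the gap series
  set g : ℕ → ℝ := fun m =>
    QL.term β (m + (k + 1)) - (a (m + (k + 1)) : ℝ) / QL.R β (m + (k + 1) + 1) with hgdef
  have hsummable_a_tail : Summable (fun m => (a (m + (k + 1)) : ℝ) / QL.R β (m + (k + 1) + 1)) :=
    (summable_nat_add_iff (f := fun j => (a j : ℝ) / QL.R β (j + 1)) (k + 1)).mpr
      (QL.summable_valid hβ hx ha)
  have hg_nonneg : ∀ m, 0 ≤ g m := fun m =>
    sub_nonneg.mpr (QL.valid_term_le hβ hx ha (m + (k + 1)))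
  have hgsummable : Summable g :=
    (QL.summable_term_add hβ hx (k + 1)).sub hsummable_a_tail
  have hgsum : ∑' m, g m = QL.T β (k + 1) -
      ∑' m, (a (m + (k + 1)) : ℝ) / QL.R β (m + (k + 1) + 1) :=
    Summable.tsum_sub (QL.summable_term_add hβ hx (k + 1)) hsummable_a_tail
  have hm0 : (n - (k + 1)) + (k + 1) = n := by omega
  have hg_m0 : 1 / QL.R β (n + 1) ≤ g (n - (k + 1)) := by
    have han : (a n : ℝ) ≤ (⌈β n⌉ : ℝ) - 2 := by
      have h1 : a n ≤ ⌈β n⌉ - 2 := by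
        have := (ha n).2
        omega
      have h2 : ((a n : ℤ) : ℝ) ≤ ((⌈β n⌉ - 2 : ℤ) : ℝ) := by exact_mod_cast h1
      push_cast at h2
      linarith
    have hgm : g (n - (k + 1)) = ((⌈β n⌉ : ℝ) - 1) / QL.R β (n + 1) -
        (a n : ℝ) / QL.R β (n + 1) := by
      rw [hgdef]
      simp only
      rw [hm0, QL.term]
    rw [hgm, div_sub_div_same]
    gcongr
    linarith
  have hS : 1 / QL.R β (n + 1) ≤ ∑' m, g m :=
    le_trans hg_m0 (Summable.le_tsum hgsummable (n - (k + 1)) fun j _ => hg_nonneg j)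
  have htail_l_ge : QL.T β (k + 1) - 1 / QL.R β (k + 1) ≤
      ∑' m, (ℓstar (m + (k + 1)) : ℝ) / QL.R β (m + (k + 1) + 1) := by
    have h2 := (hP k).2
    linarith
  have hpos : 0 < 1 / QL.R β (n + 1) := by positivity
  linarith
end
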